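/- For k ≥ 0 and a subset S ⊆ F_q, the number of monic polynomials g of degree k over F_q such that the set of roots of g in F_q is exactly S equals Σ_{j=0}^{k−|S|} C(q−|S|, j) (−1)^j q^{k−|S|−j} when |S| ≤ k, and 0 when |S| > k. -/

import Mathlib

open Polynomial

open Polynomial Finset

noncomputable section StmtAux

variable {F : Type*} [Field F] [Fintype F]

/-- the product of `X - α` over `α ∈ J` -/
def stmt7PJ (J : Finset F) : F[X] := ∏ α ∈ J, (X - C α)

lemma stmt7PJ_monic (J : Finset F) : (stmt7PJ J).Monic :=
  monic_prod_of_monic _ _ fun α _ => monic_X_sub_C α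

lemma stmt7PJ_natDegree (J : Finset F) : (stmt7PJ J).natDegree = J.card := by
  rw [stmt7PJ, natDegree_prod _ _ fun α _ => X_sub_C_ne_zero α]
  simp

lemma stmt7PJ_eval (J : Finset F) (α : F) : (stmt7PJ J).eval α = 0 ↔ α ∈ J := by
  rw [stmt7PJ, eval_prod, Finset.prod_eq_zero_iff]
  constructor
  · rintro ⟨β, hβ, h⟩
    simp only [eval_sub, eval_X, eval_C, sub_eq_zero] at h
    rwa [h]
  · intro h
    exact ⟨α, h, by simp⟩

/-- the monic polynomial with lower coefficients `c` -/
def stmt7M (m : ℕ) (c : Fin m → F) : F[X] := X ^ m + ∑ i : Fin m, C (c i) * X ^ (i : ℕ)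

lemma stmt7M_deglt (m : ℕ) (c : Fin m → F) :
    (∑ i : Fin m, C (c i) * X ^ (i : ℕ)).degree < (m : WithBot ℕ) := by
  apply lt_of_le_of_lt (degree_sum_le _ _)
  rw [Finset.sup_lt_iff (by exact_mod_cast WithBot.bot_lt_coe m)]
  intro i _
  exact lt_of_le_of_lt (degree_C_mul_X_pow_le _ _) (by exact_mod_cast i.isLt)

lemma stmt7M_monic (m : ℕ) (c : Fin m → F) : (stmt7M m c).Monic :=
  monic_X_pow_add (stmt7M_deglt m c)

lemma stmt7M_natDegree (m : ℕ) (c : Fin m → F) : (stmt7M m c).natDegree = m := by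
  have : (stmt7M m c).degree = m := by
    rw [stmt7M, degree_add_eq_left_of_degree_lt, degree_X_pow]
    rw [degree_X_pow]; exact stmt7M_deglt m c
  exact natDegree_eq_of_degree_eq_some this

lemma stmt7M_coeff (m : ℕ) (c : Fin m → F) (i : Fin m) :
    (stmt7M m c).coeff i = c i := by
  rw [stmt7M, coeff_add, coeff_X_pow, finset_sum_coeff]
  have h1 : ∀ j : Fin m, (C (c j) * X ^ (j : ℕ)).coeff i = if j = i then c j else 0 := by
    intro j
    rw [coeff_C_mul, coeff_X_pow]
    rcases eq_or_ne j i with h | h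
    · simp [h]
    · have hne : (i : ℕ) ≠ (j : ℕ) := fun hh => h (Fin.ext hh.symm)
      simp [h, hne]
  · simp only [h1]
    rw [Finset.sum_ite_eq' Finset.univ i c]
    simp [Nat.ne_of_lt i.isLt]

set_option linter.unusedSectionVars false

lemma stmt7M_eq (m : ℕ) (h : F[X]) (hmon : h.Monic) (hdeg : h.natDegree = m) :
    stmt7M m (fun i => h.coeff i) = h := by
  ext n
  rcases lt_trichotomy n m with hn | rfl | hn
  · exact stmt7M_coeff m _ ⟨n, hn⟩
  · have h1 : (stmt7M n (fun i => h.coeff i)).coeff n = 1 := by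
      have h2 := (stmt7M_monic n (fun i : Fin n => h.coeff i)).coeff_natDegree
      rwa [stmt7M_natDegree] at h2
    rw [h1, ← hdeg] at *
    exact (hmon.coeff_natDegree).symm
  · rw [coeff_eq_zero_of_natDegree_lt (by rw [stmt7M_natDegree]; exact hn),
      coeff_eq_zero_of_natDegree_lt (by rw [hdeg]; exact hn)]

lemma stmt7M_inj (m : ℕ) : Function.Injective (stmt7M (F := F) m) := by
  intro c d h
  funext i
  rw [← stmt7M_coeff m c i, ← stmt7M_coeff m d i, h]

/-- counting monic polynomials satisfying a predicate via coefficient vectors -/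
lemma stmt7_model (m : ℕ) (Q : F[X] → Prop) [DecidablePred Q] :
    Nat.card {h : F[X] // h.Monic ∧ h.natDegree = m ∧ Q h}
      = #(Finset.univ.filter fun c : Fin m → F => Q (stmt7M m c)) := by
  have hb : Function.Bijective
      (fun c : {c : Fin m → F // Q (stmt7M m c)} =>
        (⟨stmt7M m c.1, stmt7M_monic _ _, stmt7M_natDegree _ _, c.2⟩ :
          {h : F[X] // h.Monic ∧ h.natDegree = m ∧ Q h})) := by
    constructor
    · rintro ⟨c, hc⟩ ⟨d, hd⟩ h
      exact Subtype.ext (stmt7M_inj m (congrArg Subtype.val h))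
    · rintro ⟨h, hmon, hdeg, hQ⟩
      have he := stmt7M_eq m h hmon hdeg
      exact ⟨⟨fun i => h.coeff i, by rw [he]; exact hQ⟩, Subtype.ext he⟩
  rw [← Nat.card_eq_of_bijective _ hb, Nat.card_eq_fintype_card, Fintype.card_subtype]

/-- dividing out the roots in `J` -/
lemma stmt7_bij (J : Finset F) (m : ℕ) (hJ : J.card ≤ m) (R : F[X] → Prop) :
    Nat.card {g : F[X] // g.Monic ∧ g.natDegree = m ∧ (∀ α ∈ J, g.eval α = 0) ∧ R g}
      = Nat.card {h : F[X] // h.Monic ∧ h.natDegree = m - J.card ∧ R (h * stmt7PJ J)} := by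
  symm
  apply Nat.card_eq_of_bijective
    (fun h : {h : F[X] // h.Monic ∧ h.natDegree = m - J.card ∧ R (h * stmt7PJ J)} =>
      (⟨h.1 * stmt7PJ J, h.2.1.mul (stmt7PJ_monic J),
        by rw [natDegree_mul h.2.1.ne_zero (stmt7PJ_monic J).ne_zero, h.2.2.1,
            stmt7PJ_natDegree, Nat.sub_add_cancel hJ],
        fun α hα => by rw [eval_mul, (stmt7PJ_eval J α).2 hα, mul_zero],
        h.2.2.2⟩ : {g : F[X] // g.Monic ∧ g.natDegree = m ∧ (∀ α ∈ J, g.eval α = 0) ∧ R g}))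
  constructor
  · rintro ⟨a, ha⟩ ⟨b, hb⟩ h
    have := congrArg Subtype.val h
    simp only at this
    exact Subtype.ext (mul_right_cancel₀ (stmt7PJ_monic J).ne_zero this)
  · rintro ⟨g, hmon, hdeg, hroot, hR⟩
    have hdvd : stmt7PJ J ∣ g := by
      apply Finset.prod_dvd_of_coprime
      · intro a ha b hb hab
        exact isCoprime_X_sub_C_of_isUnit_sub (isUnit_iff_ne_zero.2 (sub_ne_zero_of_ne hab))
      · intro α hα
        exact dvd_iff_isRoot.2 (hroot α hα)
    obtain ⟨h, hh⟩ := hdvd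
    have hg : g = h * stmt7PJ J := by rw [hh, mul_comm]
    have hmh : h.Monic := (stmt7PJ_monic J).of_mul_monic_left (hh ▸ hmon)
    have hdh : h.natDegree = m - J.card := by
      have := natDegree_mul hmh.ne_zero (stmt7PJ_monic J).ne_zero
      rw [← hg, hdeg, stmt7PJ_natDegree] at this
      omega
    exact ⟨⟨h, hmh, hdh, hg ▸ hR⟩, Subtype.ext hg.symm⟩

lemma stmt7_empty (J : Finset F) (m : ℕ) (hm : m < J.card) (g : F[X])
    (hmon : g.Monic) (hdeg : g.natDegree = m) (hroot : ∀ α ∈ J, g.eval α = 0) : False := by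
  classical
  have h1 : J ⊆ g.roots.toFinset := fun α hα =>
    Multiset.mem_toFinset.2 (mem_roots'.2 ⟨hmon.ne_zero, hroot α hα⟩)
  have h2 := (Finset.card_le_card h1).trans
    ((Multiset.toFinset_card_le _).trans g.card_roots')
  omega

/-- the cardinality of each intersection in inclusion-exclusion -/
lemma stmt7_cnt (J : Finset F) (m : ℕ) :
    Nat.card {g : F[X] // g.Monic ∧ g.natDegree = m ∧ ∀ α ∈ J, g.eval α = 0}
      = if J.card ≤ m then Fintype.card F ^ (m - J.card) else 0 := by
  classical
  split_ifs with hJ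
  · have h1 : Nat.card {g : F[X] // g.Monic ∧ g.natDegree = m ∧ ∀ α ∈ J, g.eval α = 0}
        = Nat.card {g : F[X] // g.Monic ∧ g.natDegree = m ∧ (∀ α ∈ J, g.eval α = 0) ∧ True} :=
      Nat.card_congr (Equiv.subtypeEquivRight (by tauto))
    rw [h1, stmt7_bij J m hJ (fun _ => True),
      stmt7_model (m - J.card) (fun h => True)]
    simp [Finset.filter_true_of_mem]
  · have : IsEmpty {g : F[X] // g.Monic ∧ g.natDegree = m ∧ ∀ α ∈ J, g.eval α = 0} :=
      ⟨fun g => stmt7_empty J m (by omega) g.1 g.2.1 g.2.2.1 g.2.2.2⟩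
    exact Nat.card_of_isEmpty

end StmtAux

open Polynomial

/-- The number of monic polynomials `g` of degree `k` over `F_q` whose set of roots in `F_q`
is exactly `S` is `∑_{j=0}^{k-|S|} C(q-|S|, j) (-1)^j q^{k-|S|-j}` when `|S| ≤ k`,
and `0` when `|S| > k`. -/
theorem stmt7 {F : Type*} [Field F] [Fintype F] (k : ℕ) (S : Finset F) :
    (Nat.card {g : F[X] // g.Monic ∧ g.natDegree = k ∧
        ∀ α : F, g.eval α = 0 ↔ α ∈ S} : ℤ) =
      if S.card ≤ k then
        ∑ j ∈ Finset.range (k - S.card + 1),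
          ((Fintype.card F - S.card).choose j : ℤ) * (-1) ^ j *
            (Fintype.card F : ℤ) ^ (k - S.card - j)
      else 0 := by
  classical
  split_ifs with hk
  swap
  · have : IsEmpty {g : F[X] // g.Monic ∧ g.natDegree = k ∧ ∀ α : F, g.eval α = 0 ↔ α ∈ S} :=
      ⟨fun g => stmt7_empty S k (by omega) g.1 g.2.1 g.2.2.1 (fun α hα => (g.2.2.2 α).2 hα)⟩
    simp [Nat.card_of_isEmpty]
  set q := Fintype.card F with hq
  set m := k - S.card with hm
  set t := q - S.card with ht
  -- Step A : split the iff
  have hA : Nat.card {g : F[X] // g.Monic ∧ g.natDegree = k ∧ ∀ α : F, g.eval α = 0 ↔ α ∈ S}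
      = Nat.card {g : F[X] // g.Monic ∧ g.natDegree = k ∧ (∀ α ∈ S, g.eval α = 0) ∧
          ∀ α, α ∉ S → g.eval α ≠ 0} :=
    Nat.card_congr (Equiv.subtypeEquivRight (fun g => by
      constructor
      · rintro ⟨h1, h2, h3⟩
        exact ⟨h1, h2, fun α hα => (h3 α).2 hα, fun α hα h0 => hα ((h3 α).1 h0)⟩
      · rintro ⟨h1, h2, h3, h4⟩
        refine ⟨h1, h2, fun α => ⟨fun h0 => ?_, h3 α⟩⟩
        by_contra hα
        exact h4 α hα h0))
  -- Step B : divide out the roots in S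
  have hB := stmt7_bij S k hk (fun g => ∀ α, α ∉ S → g.eval α ≠ 0)
  -- Step C : simplify the condition
  have hC : Nat.card {h : F[X] // h.Monic ∧ h.natDegree = k - S.card ∧
        ∀ α, α ∉ S → (h * stmt7PJ S).eval α ≠ 0}
      = Nat.card {h : F[X] // h.Monic ∧ h.natDegree = m ∧ ∀ α, α ∉ S → h.eval α ≠ 0} :=
    Nat.card_congr (Equiv.subtypeEquivRight (fun h => by
      constructor
      · rintro ⟨h1, h2, h3⟩
        exact ⟨h1, h2, fun α hα h0 => h3 α hα (by rw [eval_mul, h0, zero_mul])⟩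
      · rintro ⟨h1, h2, h3⟩
        refine ⟨h1, h2, fun α hα h0 => ?_⟩
        rw [eval_mul, mul_eq_zero] at h0
        rcases h0 with h0 | h0
        · exact h3 α hα h0
        · exact hα ((stmt7PJ_eval S α).1 h0)))
  -- Step D : move to coefficient vectors
  have hD := stmt7_model (F := F) m (fun h => ∀ α, α ∉ S → h.eval α ≠ 0)
  -- Step E : the filter is an intersection of complements
  have hE : (Finset.univ.filter fun c : Fin m → F => ∀ α, α ∉ S → (stmt7M m c).eval α ≠ 0)
      = Sᶜ.inf (fun α : F =>
          (Finset.univ.filter fun c : Fin m → F => (stmt7M m c).eval α = 0)ᶜ) := by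
    ext c
    simp [Finset.mem_inf]
  -- Step F : inclusion-exclusion
  have hF := Finset.inclusion_exclusion_card_inf_compl Sᶜ
      (fun α : F => Finset.univ.filter fun c : Fin m → F => (stmt7M m c).eval α = 0)
  -- Step G : the cardinality of each intersection
  have hG : ∀ J : Finset F,
      (#(J.inf (fun α : F =>
          Finset.univ.filter fun c : Fin m → F => (stmt7M m c).eval α = 0)) : ℤ)
        = if #J ≤ m then (q : ℤ) ^ (m - #J) else 0 := by
    intro J
    have h1 : J.inf (fun α : F =>
          Finset.univ.filter fun c : Fin m → F => (stmt7M m c).eval α = 0)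
        = Finset.univ.filter fun c : Fin m → F => ∀ α ∈ J, (stmt7M m c).eval α = 0 := by
      ext c
      simp [Finset.mem_inf]
    rw [h1, ← stmt7_model (F := F) m (fun h => ∀ α ∈ J, h.eval α = 0), stmt7_cnt J m]
    split_ifs <;> simp [hq]
  rw [hA, hB, hC, hD, hE, hF]
  -- Step H : group the subsets by cardinality
  have hH : ∀ J ∈ Sᶜ.powerset, ((-1 : ℤ) ^ #J *
        #(J.inf (fun α : F =>
          Finset.univ.filter fun c : Fin m → F => (stmt7M m c).eval α = 0)))
      = (fun j => (-1 : ℤ) ^ j * (if j ≤ m then (q : ℤ) ^ (m - j) else 0)) #J := by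
    intro J _
    rw [hG J]
  have hP := Finset.sum_powerset_apply_card (x := Sᶜ)
    (f := fun j => (-1 : ℤ) ^ j * (if j ≤ m then (q : ℤ) ^ (m - j) else 0))
  rw [Finset.sum_congr rfl hH, hP, Finset.card_compl, ← hq, ← ht]
  -- Step I : final sum manipulation
  have hg : ∀ j, t < j →
      (t.choose j : ℤ) • ((-1 : ℤ) ^ j * (if j ≤ m then (q : ℤ) ^ (m - j) else 0)) = 0 := by
    intro j hj
    rw [Nat.choose_eq_zero_of_lt hj]
    simp
  have hsub1 : ∑ j ∈ Finset.range (t + 1),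
        (t.choose j) • ((-1 : ℤ) ^ j * (if j ≤ m then (q : ℤ) ^ (m - j) else 0))
      = ∑ j ∈ Finset.range (max t m + 1),
        (t.choose j) • ((-1 : ℤ) ^ j * (if j ≤ m then (q : ℤ) ^ (m - j) else 0)) := by
    apply Finset.sum_subset (Finset.range_subset_range.2 (by omega))
    intro j hj1 hj2
    rw [Finset.mem_range] at hj1 hj2
    exact hg j (by omega)
  have hsub2 : ∑ j ∈ Finset.range (m + 1),
        (t.choose j : ℤ) * (-1 : ℤ) ^ j * (q : ℤ) ^ (m - j)
      = ∑ j ∈ Finset.range (max t m + 1),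
        (t.choose j) • ((-1 : ℤ) ^ j * (if j ≤ m then (q : ℤ) ^ (m - j) else 0)) := by
    rw [← Finset.sum_subset (Finset.range_subset_range.2 (by omega : m + 1 ≤ max t m + 1))
      (fun j hj1 hj2 => by
        rw [Finset.mem_range] at hj1 hj2
        rw [if_neg (by omega)]
        simp)]
    apply Finset.sum_congr rfl
    intro j hj
    rw [Finset.mem_range] at hj
    rw [if_pos (by omega), nsmul_eq_mul, mul_assoc]
  rw [hsub1, ← hsub2]
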